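/- There exists a weakly connected, weight-balanced graph on 3 nodes and an initial condition x̂ such that no Carathéodory solution of ẋ = −L q_Δ(x) exists starting at x̂. Concretely, for the path graph with edges {1,2} and {2,3} (unit weights, symmetric) and x̂ = (Δ, (3/2)Δ, 2Δ), the right-hand side satisfies: for all x in a neighborhood of x̂ with x₂ > (3/2)Δ, the second component of −L q_Δ(x) equals −Δ, and for all x in that neighborhood with x₂ < (3/2)Δ, the second component equals +Δ. -/

import Mathlib

open Matrix MeasureTheory

/-- The uniform quantizer with step `Δ`. -/
noncomputable def qd (Δ z : ℝ) : ℝ := ⌊z / Δ + 1 / 2⌋ * Δ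

lemma qd_eq {Δ : ℝ} (hΔ : 0 < Δ) (n : ℤ) {z : ℝ}
    (h1 : n * Δ - Δ / 2 ≤ z) (h2 : z < n * Δ + Δ / 2) :
    qd Δ z = n * Δ := by
  unfold qd
  have hfl : ⌊z / Δ + 1 / 2⌋ = n := by
    rw [Int.floor_eq_iff]
    constructor
    · have : (n : ℝ) - 1/2 ≤ z / Δ := by
        rw [le_div_iff₀ hΔ]; nlinarith
      linarith
    · have : z / Δ < (n : ℝ) + 1/2 := by
        rw [div_lt_iff₀ hΔ]; nlinarith
      push_cast
      linarith
  rw [hfl]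

theorem no_caratheodory_solution (Δ : ℝ) (hΔ : 0 < Δ)
    (L : Matrix (Fin 3) (Fin 3) ℝ)
    (hL : L = !![1, -1, 0; -1, 2, -1; 0, -1, 1])
    (xhat : Fin 3 → ℝ) (hxhat : xhat = ![Δ, 3 / 2 * Δ, 2 * Δ]) :
    (∃ U ∈ nhds xhat, ∀ x ∈ U,
      (3 / 2 * Δ < x 1 → (-(L.mulVec fun i => qd Δ (x i))) 1 = -Δ) ∧
      (x 1 < 3 / 2 * Δ → (-(L.mulVec fun i => qd Δ (x i))) 1 = Δ)) ∧
    ¬ ∃ (x : ℝ → Fin 3 → ℝ) (T : ℝ), 0 < T ∧ x 0 = xhat ∧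
        ContinuousOn x (Set.Icc 0 T) ∧
        ∀ t ∈ Set.Icc (0 : ℝ) T,
          x t = xhat + ∫ s in (0 : ℝ)..t, -(L.mulVec fun i => qd Δ (x s i)) := by
  -- quantizer values on the ball of radius Δ/2 around xhat
  have hdist : ∀ v : Fin 3 → ℝ, dist v xhat < Δ/2 → ∀ i, |v i - xhat i| < Δ/2 := by
    intro v hv i
    rw [← Real.dist_eq]
    exact lt_of_le_of_lt (dist_le_pi_dist v xhat i) hv
  have hq0 : ∀ v : Fin 3 → ℝ, dist v xhat < Δ/2 → qd Δ (v 0) = Δ := by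
    intro v hv
    have h := hdist v hv 0
    rw [hxhat] at h; simp only [Matrix.cons_val_zero] at h
    rw [abs_lt] at h
    have := qd_eq hΔ 1 (z := v 0) (by push_cast; linarith) (by push_cast; linarith)
    simpa using this
  have hq2 : ∀ v : Fin 3 → ℝ, dist v xhat < Δ/2 → qd Δ (v 2) = 2*Δ := by
    intro v hv
    have h := hdist v hv 2
    rw [hxhat] at h
    simp only [Matrix.cons_val_two, Matrix.tail_cons, Matrix.head_cons] at h
    rw [abs_lt] at h
    have := qd_eq hΔ 2 (z := v 2) (by push_cast; linarith) (by push_cast; linarith)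
    simpa using this
  have hq1 : ∀ v : Fin 3 → ℝ, dist v xhat < Δ/2 →
      qd Δ (v 1) = if 3/2*Δ ≤ v 1 then 2*Δ else Δ := by
    intro v hv
    have h := hdist v hv 1
    rw [hxhat] at h
    simp only [Matrix.cons_val_one, Matrix.head_cons, Matrix.cons_val_zero] at h
    rw [abs_lt] at h
    by_cases hc : 3/2*Δ ≤ v 1
    · rw [if_pos hc]
      have := qd_eq hΔ 2 (z := v 1) (by push_cast; linarith) (by push_cast; linarith)
      simpa using this
    · rw [if_neg hc]
      push_neg at hc
      have := qd_eq hΔ 1 (z := v 1) (by push_cast; linarith) (by push_cast; linarith)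
      simpa using this
  -- full value of the vector field on the ball
  have hVval : ∀ v : Fin 3 → ℝ, dist v xhat < Δ/2 →
      (-(L.mulVec fun i => qd Δ (v i)))
        = if 3/2*Δ ≤ v 1 then ![Δ, -Δ, 0] else ![0, Δ, -Δ] := by
    intro v hv
    have e0 := hq0 v hv
    have e1 := hq1 v hv
    have e2 := hq2 v hv
    funext j
    rw [hL]
    fin_cases j <;>
      simp only [Pi.neg_apply, Matrix.mulVec, dotProduct, Fin.sum_univ_three,
        Matrix.cons_val', Matrix.cons_val_zero, Matrix.cons_val_one, Matrix.head_cons,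
        Matrix.cons_val_two, Matrix.tail_cons, Matrix.empty_val', Matrix.cons_val_fin_one,
        Matrix.head_fin_const, Fin.isValue] <;>
      rw [e0, e1, e2] <;>
      by_cases hc : 3/2*Δ ≤ v 1 <;>
      simp [hc] <;> ring
  have hval : ∀ v : Fin 3 → ℝ, dist v xhat < Δ/2 →
      (-(L.mulVec fun i => qd Δ (v i))) 1 = if 3/2*Δ ≤ v 1 then -Δ else Δ := by
    intro v hv
    rw [hVval v hv]
    by_cases hc : 3/2*Δ ≤ v 1 <;> simp [hc]
  constructor
  · refine ⟨Metric.ball xhat (Δ/2), Metric.ball_mem_nhds _ (by linarith), ?_⟩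
    intro v hv
    have hv' : dist v xhat < Δ/2 := Metric.mem_ball.mp hv
    have h := hval v hv'
    exact ⟨fun h1 => by rw [h, if_pos h1.le],
           fun h1 => by rw [h, if_neg (not_le.mpr h1)]⟩
  · rintro ⟨x, T, hT, hx0, hcont, heq⟩
    -- find ε > 0 such that x stays in the ball on [0, ε]
    have hcw : ContinuousWithinAt x (Set.Icc 0 T) 0 :=
      hcont 0 ⟨le_refl 0, hT.le⟩
    rw [Metric.continuousWithinAt_iff] at hcw
    obtain ⟨δ, hδ, hδ'⟩ := hcw (Δ/2) (by linarith)
    set ε := min (δ/2) T with hε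
    have hε0 : 0 < ε := lt_min (by linarith) hT
    have hεT : ε ≤ T := min_le_right _ _
    have hball : ∀ s ∈ Set.Icc (0:ℝ) ε, dist (x s) xhat < Δ/2 := by
      intro s hs
      have hsT : s ∈ Set.Icc 0 T := ⟨hs.1, hs.2.trans hεT⟩
      have hd : dist s 0 < δ := by
        rw [Real.dist_eq, sub_zero, abs_of_nonneg hs.1]
        exact lt_of_le_of_lt hs.2 (lt_of_le_of_lt (min_le_left _ _) (by linarith))
      have := hδ' hsT hd
      rwa [hx0] at this
    set y : ℝ → ℝ := fun t => x t 1 with hy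
    set V : ℝ → (Fin 3 → ℝ) := fun s => -(L.mulVec fun i => qd Δ (x s i)) with hV
    set g : ℝ → ℝ := fun s => V s 1 with hg
    have hgval : ∀ s ∈ Set.Icc (0:ℝ) ε, g s = if 3/2*Δ ≤ y s then -Δ else Δ :=
      fun s hs => hval _ (hball s hs)
    have hy0 : y 0 = 3/2*Δ := by
      simp only [hy, hx0, hxhat]; simp
    -- continuity of y on [0, ε]
    have hxcont : ContinuousOn x (Set.Icc 0 ε) :=
      hcont.mono (Set.Icc_subset_Icc le_rfl hεT)
    have hycont : ContinuousOn y (Set.Icc 0 ε) :=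
      (continuous_apply 1).comp_continuousOn hxcont
    -- measurable modification of y on [0, ε]
    obtain ⟨y', hy'm, hy'ae⟩ := (hycont.aemeasurable measurableSet_Icc)
    have hmem : ∀ᵐ s ∂(volume.restrict (Set.Icc (0:ℝ) ε)), s ∈ Set.Icc (0:ℝ) ε :=
      ae_restrict_mem measurableSet_Icc
    -- integrability of V on [0, ε]
    have hVint : IntegrableOn V (Set.Icc 0 ε) := by
      set V' : ℝ → (Fin 3 → ℝ) := fun s =>
        if 3/2*Δ ≤ y' s then ![Δ, -Δ, 0] else ![0, Δ, -Δ] with hV'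
      have hV'm : Measurable V' :=
        Measurable.ite (measurableSet_le measurable_const hy'm)
          measurable_const measurable_const
      have hV'int : IntegrableOn V' (Set.Icc 0 ε) := by
        refine Integrable.mono' (integrable_const Δ) hV'm.aestronglyMeasurable ?_
        filter_upwards with s
        by_cases h : 3/2*Δ ≤ y' s <;>
        · rw [hV']
          simp only [h, if_true, if_false]
          rw [pi_norm_le_iff_of_nonneg hΔ.le]
          intro i
          fin_cases i <;> simp [Real.norm_eq_abs, abs_of_pos hΔ, abs_of_nonneg hΔ.le] <;> linarith
      refine hV'int.congr ?_
      filter_upwards [hmem, hy'ae] with s hs hys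
      show (if 3/2*Δ ≤ y' s then ![Δ, -Δ, 0] else ![0, Δ, -Δ]) = V s
      rw [← hys]
      exact (hVval _ (hball s hs)).symm
    have hgint : IntegrableOn g (Set.Icc 0 ε) := by
      have : g = (fun v : Fin 3 → ℝ => v 1) ∘ V := rfl
      exact (ContinuousLinearMap.proj (R := ℝ) (φ := fun _ : Fin 3 => ℝ) 1).integrable_comp hVint
    have hVii : ∀ a b : ℝ, a ∈ Set.Icc (0:ℝ) ε → b ∈ Set.Icc (0:ℝ) ε →
        IntervalIntegrable V volume a b := fun a b ha hb =>
      (hVint.mono_set (Set.uIcc_subset_Icc ha hb)).intervalIntegrable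
    have hgii : ∀ a b : ℝ, a ∈ Set.Icc (0:ℝ) ε → b ∈ Set.Icc (0:ℝ) ε →
        IntervalIntegrable g volume a b := fun a b ha hb =>
      (hgint.mono_set (Set.uIcc_subset_Icc ha hb)).intervalIntegrable
    -- the scalar integral equation
    have hyeq : ∀ t ∈ Set.Icc (0:ℝ) ε, y t = 3/2*Δ + ∫ s in (0:ℝ)..t, g s := by
      intro t ht
      have h := heq t ⟨ht.1, ht.2.trans hεT⟩
      have happ := congrFun h 1
      rw [Pi.add_apply] at happ
      have hproj := (ContinuousLinearMap.proj (R := ℝ) (φ := fun _ : Fin 3 => ℝ) 1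
        ).intervalIntegral_comp_comm (hVii 0 t ⟨le_refl 0, hε0.le⟩ ht)
      simp only [ContinuousLinearMap.proj_apply] at hproj
      show x t 1 = _
      rw [happ, hxhat]
      simp only [Matrix.cons_val_one, Matrix.head_cons, Matrix.cons_val_zero]
      rw [← hproj]
    have hkey : ∀ a b : ℝ, a ∈ Set.Icc (0:ℝ) ε → b ∈ Set.Icc (0:ℝ) ε →
        y b = y a + ∫ s in a..b, g s := by
      intro a b ha hb
      have h1 := hyeq a ha
      have h2 := hyeq b hb
      have h3 := intervalIntegral.integral_add_adjacent_intervals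
        (hgii 0 a ⟨le_refl 0, hε0.le⟩ ha) (hgii a b ha hb)
      rw [h1, h2, ← h3]
      ring
    -- claim 1 : y ≤ 3/2 Δ on [0, ε]
    have claim1 : ∀ t ∈ Set.Icc (0:ℝ) ε, y t ≤ 3/2*Δ := by
      by_contra hcon
      push_neg at hcon
      obtain ⟨t, ht, hyt⟩ := hcon
      set S := {s : ℝ | s ∈ Set.Icc 0 t ∧ y s ≤ 3/2*Δ} with hS
      have h0S : (0:ℝ) ∈ S := ⟨⟨le_refl 0, ht.1⟩, le_of_eq hy0⟩
      have hbdd : BddAbove S := ⟨t, fun s hs => hs.1.2⟩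
      have hSsub : Set.Icc (0:ℝ) t ⊆ Set.Icc 0 ε := Set.Icc_subset_Icc le_rfl ht.2
      have hclosed : IsClosed S := by
        have : S = Set.Icc 0 t ∩ y ⁻¹' (Set.Iic (3/2*Δ)) := rfl
        rw [this]
        exact (hycont.mono hSsub).preimage_isClosed_of_isClosed isClosed_Icc isClosed_Iic
      set t0 := sSup S with ht0def
      have ht0S : t0 ∈ S := hclosed.csSup_mem ⟨0, h0S⟩ hbdd
      have ht0t : t0 < t := lt_of_le_of_ne ht0S.1.2 (by
        intro hcontra
        rw [hcontra] at ht0S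
        linarith [ht0S.2])
      have hmid : ∀ s ∈ Set.Ioc t0 t, g s = -Δ := by
        intro s hs
        have hs0 : (0:ℝ) ≤ s := le_trans ht0S.1.1 hs.1.le
        have hsε : s ∈ Set.Icc (0:ℝ) ε := ⟨hs0, hs.2.trans ht.2⟩
        have hns : ¬ y s ≤ 3/2*Δ := by
          intro hys
          have : s ≤ t0 := le_csSup hbdd ⟨⟨hs0, hs.2⟩, hys⟩
          linarith [hs.1]
        rw [hgval s hsε, if_pos (le_of_not_ge hns)]
      have hint : (∫ s in t0..t, g s) = (t - t0) * (-Δ) := by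
        rw [intervalIntegral.integral_congr_ae (g := fun _ => (-Δ : ℝ)) ?_,
          intervalIntegral.integral_const, smul_eq_mul]
        filter_upwards with s hs
        rw [Set.uIoc_of_le ht0t.le] at hs
        exact hmid s hs
      have := hkey t0 t ⟨ht0S.1.1, ht0S.1.2.trans ht.2⟩ ht
      rw [hint] at this
      have ht0le := ht0S.2
      nlinarith
    -- claim 2 : y ≥ 3/2 Δ on [0, ε]
    have claim2 : ∀ t ∈ Set.Icc (0:ℝ) ε, 3/2*Δ ≤ y t := by
      by_contra hcon
      push_neg at hcon
      obtain ⟨t, ht, hyt⟩ := hcon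
      set S := {s : ℝ | s ∈ Set.Icc 0 t ∧ 3/2*Δ ≤ y s} with hS
      have h0S : (0:ℝ) ∈ S := ⟨⟨le_refl 0, ht.1⟩, ge_of_eq hy0⟩
      have hbdd : BddAbove S := ⟨t, fun s hs => hs.1.2⟩
      have hSsub : Set.Icc (0:ℝ) t ⊆ Set.Icc 0 ε := Set.Icc_subset_Icc le_rfl ht.2
      have hclosed : IsClosed S := by
        have : S = Set.Icc 0 t ∩ y ⁻¹' (Set.Ici (3/2*Δ)) := rfl
        rw [this]
        exact (hycont.mono hSsub).preimage_isClosed_of_isClosed isClosed_Icc isClosed_Ici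
      set t0 := sSup S with ht0def
      have ht0S : t0 ∈ S := hclosed.csSup_mem ⟨0, h0S⟩ hbdd
      have ht0t : t0 < t := lt_of_le_of_ne ht0S.1.2 (by
        intro hcontra
        rw [hcontra] at ht0S
        linarith [ht0S.2])
      have hmid : ∀ s ∈ Set.Ioc t0 t, g s = Δ := by
        intro s hs
        have hs0 : (0:ℝ) ≤ s := le_trans ht0S.1.1 hs.1.le
        have hsε : s ∈ Set.Icc (0:ℝ) ε := ⟨hs0, hs.2.trans ht.2⟩
        have hns : ¬ 3/2*Δ ≤ y s := by
          intro hys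
          have : s ≤ t0 := le_csSup hbdd ⟨⟨hs0, hs.2⟩, hys⟩
          linarith [hs.1]
        rw [hgval s hsε, if_neg hns]
      have hint : (∫ s in t0..t, g s) = (t - t0) * Δ := by
        rw [intervalIntegral.integral_congr_ae (g := fun _ => (Δ : ℝ)) ?_,
          intervalIntegral.integral_const, smul_eq_mul]
        filter_upwards with s hs
        rw [Set.uIoc_of_le ht0t.le] at hs
        exact hmid s hs
      have := hkey t0 t ⟨ht0S.1.1, ht0S.1.2.trans ht.2⟩ ht
      rw [hint] at this
      have ht0ge := ht0S.2
      nlinarith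
    -- conclusion
    have hgconst : ∀ s ∈ Set.Ioc (0:ℝ) ε, g s = -Δ := by
      intro s hs
      have hsε : s ∈ Set.Icc (0:ℝ) ε := ⟨hs.1.le, hs.2⟩
      rw [hgval s hsε, if_pos (claim2 s hsε)]
    have hint : (∫ s in (0:ℝ)..ε, g s) = ε * (-Δ) := by
      rw [intervalIntegral.integral_congr_ae (g := fun _ => (-Δ : ℝ)) ?_,
        intervalIntegral.integral_const, smul_eq_mul, sub_zero]
      filter_upwards with s hs
      rw [Set.uIoc_of_le hε0.le] at hs
      exact hgconst s hs
    have hfin := hkey 0 ε ⟨le_refl 0, hε0.le⟩ ⟨hε0.le, le_refl ε⟩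
    rw [hint, hy0] at hfin
    have hyε := claim2 ε ⟨hε0.le, le_refl ε⟩
    nlinarith
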